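/- In the ILT model, the domination number is invariant: γ(G_{t+1}) = γ(G_t) for all t ≥ 0, and hence γ(G_t) = γ(G_0) for all t. -/

import Mathlib

open SimpleGraph Finset

universe u
variable {V : Type u}

/-- One step of the Iterated Local Transitivity model: every vertex `x` gets a
clone `Sum.inr x` joined to `x` and all of its neighbours; old vertices are `Sum.inl`. -/
def ILTstep (G : SimpleGraph V) : SimpleGraph (V ⊕ V) where
  Adj a b := match a, b with
    | Sum.inl x, Sum.inl y => G.Adj x y
    | Sum.inl x, Sum.inr y => x = y ∨ G.Adj x y
    | Sum.inr x, Sum.inl y => x = y ∨ G.Adj x y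
    | Sum.inr _, Sum.inr _ => False
  symm := by
    constructor
    rintro (x | x) (y | y) h
    · exact G.adj_symm h
    · exact h.imp Eq.symm (fun hh => G.adj_symm hh)
    · exact h.imp Eq.symm (fun hh => G.adj_symm hh)
    · exact h.elim
  loopless := by
    constructor
    rintro (x | x) h
    · exact G.irrefl h
    · exact h

instance ILTstepDecAdj (G : SimpleGraph V) [DecidableEq V] [DecidableRel G.Adj] :
    DecidableRel (ILTstep G).Adj := fun a b =>
  match a, b with
  | Sum.inl x, Sum.inl y => inferInstanceAs (Decidable (G.Adj x y))
  | Sum.inl x, Sum.inr y => inferInstanceAs (Decidable (x = y ∨ G.Adj x y))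
  | Sum.inr x, Sum.inl y => inferInstanceAs (Decidable (x = y ∨ G.Adj x y))
  | Sum.inr _, Sum.inr _ => inferInstanceAs (Decidable False)

/-- The vertex set of the ILT model at time `t`. -/
def ILTV (V : Type u) : ℕ → Type u
  | 0 => V
  | t + 1 => ILTV V t ⊕ ILTV V t

/-- The graph of the ILT model at time `t`, starting from `G`. -/
def ILTG (G : SimpleGraph V) : (t : ℕ) → SimpleGraph (ILTV V t)
  | 0 => G
  | t + 1 => ILTstep (ILTG G t)

instance ILTVFintype [Fintype V] : ∀ t, Fintype (ILTV V t)
  | 0 => inferInstanceAs (Fintype V)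
  | t + 1 => letI := ILTVFintype t
             inferInstanceAs (Fintype (ILTV V t ⊕ ILTV V t))

instance ILTVDecEq [DecidableEq V] : ∀ t, DecidableEq (ILTV V t)
  | 0 => inferInstanceAs (DecidableEq V)
  | t + 1 => letI := ILTVDecEq t
             inferInstanceAs (DecidableEq (ILTV V t ⊕ ILTV V t))

instance ILTGDecAdj (G : SimpleGraph V) [DecidableEq V] [DecidableRel G.Adj] :
    ∀ t, DecidableRel (ILTG G t).Adj
  | 0 => inferInstanceAs (DecidableRel G.Adj)
  | t + 1 => letI : DecidableEq (ILTV V t) := ILTVDecEq t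
             letI : DecidableRel (ILTG G t).Adj := ILTGDecAdj G t
             ILTstepDecAdj (ILTG G t)

/-- The volume of a graph: the sum of the degrees of its vertices. -/
def graphVol [Fintype V] (G : SimpleGraph V) [DecidableRel G.Adj] : ℕ :=
  ∑ v, G.degree v

/-- The Wiener index: the sum of distances over unordered pairs of vertices. -/
noncomputable def wienerIndex [Fintype V] (G : SimpleGraph V) : ℕ :=
  (∑ x : V, ∑ y : V, G.dist x y) / 2

/-- The domination number: the minimum size of a set `S` such that every vertex
not in `S` has a neighbour in `S`. -/
noncomputable def dominationNumber [Fintype V] (G : SimpleGraph V) : ℕ :=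
  sInf {n | ∃ S : Finset V, S.card = n ∧ ∀ v ∉ S, ∃ u ∈ S, G.Adj u v}

lemma dom_nonempty' [Fintype V] (G : SimpleGraph V) :
    {n | ∃ S : Finset V, S.card = n ∧ ∀ v ∉ S, ∃ u ∈ S, G.Adj u v}.Nonempty :=
  ⟨(Finset.univ : Finset V).card, Finset.univ, rfl,
    fun v hv => absurd (Finset.mem_univ v) hv⟩

lemma ILTstep_dom [Fintype V] (G : SimpleGraph V) :
    dominationNumber (ILTstep G) = dominationNumber G := by
  classical
  unfold dominationNumber
  apply le_antisymm
  · obtain ⟨S, hcard, hdom⟩ := Nat.sInf_mem (dom_nonempty' G)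
    rw [← hcard]
    have hc : (S.image (Sum.inl : V → V ⊕ V)).card = S.card :=
      Finset.card_image_of_injective _ Sum.inl_injective
    refine Nat.sInf_le ⟨S.image (Sum.inl : V → V ⊕ V), hc, ?_⟩
    rintro (v | v) hv
    · have hvS : v ∉ S := fun h => hv (Finset.mem_image_of_mem _ h)
      obtain ⟨u, hu, hadj⟩ := hdom v hvS
      exact ⟨Sum.inl u, Finset.mem_image_of_mem _ hu, hadj⟩
    · by_cases hvS : v ∈ S
      · exact ⟨Sum.inl v, Finset.mem_image_of_mem _ hvS, Or.inl rfl⟩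
      · obtain ⟨u, hu, hadj⟩ := hdom v hvS
        exact ⟨Sum.inl u, Finset.mem_image_of_mem _ hu, Or.inr hadj⟩
  · obtain ⟨S, hcard, hdom⟩ := Nat.sInf_mem (dom_nonempty' (ILTstep G))
    rw [← hcard]
    set T : Finset V := S.image (Sum.elim id id : V ⊕ V → V) with hT
    have hc : T.card ≤ S.card := Finset.card_image_le
    refine le_trans (Nat.sInf_le ⟨T, rfl, ?_⟩) hc
    intro v hv
    have hvl : Sum.inl v ∉ S := fun h => hv (Finset.mem_image_of_mem _ h)
    have hvr : Sum.inr v ∉ S := fun h => hv (Finset.mem_image_of_mem _ h)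
    obtain ⟨u, hu, hadj⟩ := hdom (Sum.inl v) hvl
    cases u with
    | inl u =>
      exact ⟨u, Finset.mem_image_of_mem _ hu, hadj⟩
    | inr u =>
      rcases hadj with h | h
      · exact absurd (h ▸ hu) hvr
      · exact ⟨u, Finset.mem_image_of_mem _ hu, h⟩

theorem ILT_domination_number [Fintype V] (G : SimpleGraph V) :
    (∀ t, dominationNumber (ILTG G (t + 1)) = dominationNumber (ILTG G t)) ∧
    (∀ t, dominationNumber (ILTG G t) = dominationNumber G) := by
  have hstep : ∀ t, dominationNumber (ILTG G (t + 1)) = dominationNumber (ILTG G t) :=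
    fun t => ILTstep_dom (ILTG G t)
  refine ⟨hstep, ?_⟩
  intro t
  induction t with
  | zero => rfl
  | succ t ih => rw [hstep t, ih]
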